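/- Every consistent set of sentences over a signature α can be extended to a consistent set over the signature α* (obtained by adding countably many fresh constants) that has the ∀-property. -/

import Mathlib

/-- Terms: variables or constants. -/
inductive Tm (C : Type) : Type
  | var : ℕ → Tm C
  | const : C → Tm C
deriving DecidableEq

/-- Formulas of first-order coalition logic over a signature ⟨n, C, Ap⟩. -/
inductive Form (n : ℕ) (C : Type) (Ap : Type) : Type
  | atom : Ap → Form n C Ap
  | neg : Form n C Ap → Form n C Ap
  | and : Form n C Ap → Form n C Ap → Form n C Ap
  | box : (Fin n → Tm C) → Form n C Ap → Form n C Ap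
  | all : ℕ → Form n C Ap → Form n C Ap

namespace Form

variable {n : ℕ} {C Ap : Type}

def imp (φ ψ : Form n C Ap) : Form n C Ap := .neg (.and φ (.neg ψ))
def iff (φ ψ : Form n C Ap) : Form n C Ap := .and (imp φ ψ) (imp ψ φ)
def ex (x : ℕ) (φ : Form n C Ap) : Form n C Ap := .neg (.all x (.neg φ))

open Classical in
/-- Substitution of a term for a variable. -/
noncomputable def substT (t : Tm C) (x : ℕ) : Form n C Ap → Form n C Ap
  | .atom p => .atom p
  | .neg φ => .neg (substT t x φ)
  | .and φ ψ => .and (substT t x φ) (substT t x ψ)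
  | .box ts φ => .box (fun i => if ts i = .var x then t else ts i) (substT t x φ)
  | .all y φ => if y = x then .all y φ else .all y (substT t x φ)

/-- Substitution of a constant for a variable. -/
noncomputable def subst (a : C) (x : ℕ) (φ : Form n C Ap) : Form n C Ap := substT (.const a) x φ

/-- Free variables. -/
def FV : Form n C Ap → Finset ℕ
  | .atom _ => ∅
  | .neg φ => FV φ
  | .and φ ψ => FV φ ∪ FV ψ
  | .box ts φ => FV φ ∪ Finset.univ.biUnion (fun i => match ts i with | Tm.var x => {x} | _ => ∅)
  | .all y φ => FV φ \ {y}

/-- A sentence (closed formula). -/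
def closed (φ : Form n C Ap) : Prop := FV φ = ∅

/-- Universal closure of a formula. -/
def closure (φ : Form n C Ap) : Form n C Ap := ((FV φ).sort (· ≤ ·)).foldr Form.all φ

def size : Form n C Ap → ℕ
  | .atom _ => 1
  | .neg φ => size φ + 1
  | .and φ ψ => size φ + size ψ + 1
  | .box _ φ => size φ + 1
  | .all _ φ => size φ + 1

theorem size_substT (t : Tm C) (x : ℕ) (φ : Form n C Ap) :
    size (substT t x φ) = size φ := by
  induction φ with
  | atom p => rfl
  | neg φ ih => simp [substT, size, ih]
  | and φ ψ ih1 ih2 => simp [substT, size, ih1, ih2]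
  | box ts φ ih => simp [substT, size, ih]
  | all y φ ih => by_cases h : y = x <;> simp [substT, size, h, ih]

/-- Whether a term occurs in a formula. -/
def occursT (t : Tm C) : Form n C Ap → Prop
  | .atom _ => False
  | .neg φ => occursT t φ
  | .and φ ψ => occursT t φ ∨ occursT t ψ
  | .box ts φ => (∃ i, ts i = t) ∨ occursT t φ
  | .all y φ => (t = Tm.var y) ∨ occursT t φ

end Form

/-- A concurrent game structure over a signature ⟨n, C, Ap⟩ (actions = constants). -/
structure CGS (n : ℕ) (C : Type) (Ap : Type) where
  S : Type
  R : S → (Fin n → C) → S → Prop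
  V : Ap → S → Prop

namespace CGS

variable {n : ℕ} {C Ap : Type}

def Serial (G : CGS n C Ap) : Prop := ∀ s d, ∃ t, G.R s d t

def Functional (G : CGS n C Ap) : Prop := ∀ s d t v, G.R s d t → G.R s d v → t = v

end CGS

/-- Satisfaction of (closed) formulas in a CGS. -/
def Sat {n : ℕ} {C Ap : Type} (G : CGS n C Ap) : G.S → Form n C Ap → Prop
  | s, .atom p => G.V p s
  | s, .neg φ => ¬ Sat G s φ
  | s, .and φ ψ => Sat G s φ ∧ Sat G s ψ
  | s, .box ts φ => ∃ d : Fin n → C, (∀ i, ts i = Tm.const (d i)) ∧ ∃ t, G.R s d t ∧ Sat G t φ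
  | s, .all x φ => ∀ a : C, Sat G s (Form.subst a x φ)
termination_by _ φ => Form.size φ
decreasing_by all_goals simp [Form.subst, Form.size_substT, Form.size] <;> omega

/-- Truth of a possibly open formula: truth of its universal closure. -/
def SatC {n : ℕ} {C Ap : Type} (G : CGS n C Ap) (s : G.S) (φ : Form n C Ap) : Prop :=
  Sat G s (Form.closure φ)

/-- Validity in a CGS. -/
def ValidIn {n : ℕ} {C Ap : Type} (G : CGS n C Ap) (φ : Form n C Ap) : Prop :=
  ∀ s : G.S, SatC G s φ

/-- Propositional evaluation treating atoms, boxes and quantified formulas as atomic. -/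
def evalP {n : ℕ} {C Ap : Type} (v : Form n C Ap → Prop) : Form n C Ap → Prop
  | .neg φ => ¬ evalP v φ
  | .and φ ψ => evalP v φ ∧ evalP v ψ
  | .atom p => v (.atom p)
  | .box ts φ => v (.box ts φ)
  | .all x φ => v (.all x φ)

/-- Propositional tautologies. -/
def Taut {n : ℕ} {C Ap : Type} (φ : Form n C Ap) : Prop :=
  ∀ v : Form n C Ap → Prop, evalP v φ

/-- The axiom system of first-order coalition logic. -/
inductive Deriv {n : ℕ} {C Ap : Type} : Form n C Ap → Prop
  | PC {φ} : Taut φ → Deriv φ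
  | K (ts : Fin n → Tm C) (φ ψ) :
      Deriv (Form.iff (.and (.box ts φ) (.box ts ψ)) (.box ts (.and φ ψ)))
  | N (ts : Fin n → Tm C) (φ) :
      Deriv (Form.iff (.neg (.box ts φ)) (.box ts (.neg φ)))
  | E (x : ℕ) (t : Tm C) (φ) : Deriv (Form.imp (.all x φ) (Form.substT t x φ))
  | B (ts : Fin n → Tm C) (x : ℕ) (φ) (h : ∀ i, ts i ≠ Tm.var x) :
      Deriv (Form.imp (.all x (.box ts φ)) (.box ts (.all x φ)))
  | MP {φ ψ} : Deriv (Form.imp φ ψ) → Deriv φ → Deriv ψ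
  | Nec (ts : Fin n → Tm C) {φ} : Deriv φ → Deriv (.box ts φ)
  | Gen {φ ψ} (t : Tm C) (x : ℕ) :
      Deriv (Form.imp φ (Form.substT t x ψ)) → ¬ Form.occursT t φ →
      Deriv (Form.imp φ (.all x ψ))

/-- Derivability from a set of formulas. -/
def DerivFrom {n : ℕ} {C Ap : Type} (X : Set (Form n C Ap)) (φ : Form n C Ap) : Prop :=
  ∃ L : List (Form n C Ap), (∀ ψ ∈ L, ψ ∈ X) ∧ Deriv (L.foldr Form.imp φ)

def Consistent {n : ℕ} {C Ap : Type} (X : Set (Form n C Ap)) : Prop :=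
  ¬ ∃ φ, DerivFrom X φ ∧ DerivFrom X (.neg φ)

/-- A set of sentences. -/
def SentenceSet {n : ℕ} {C Ap : Type} (X : Set (Form n C Ap)) : Prop :=
  ∀ φ ∈ X, Form.closed φ

/-- Maximal consistent set (of sentences). -/
def MCS {n : ℕ} {C Ap : Type} (X : Set (Form n C Ap)) : Prop :=
  Consistent X ∧ ∀ ψ, Form.closed ψ → ψ ∉ X → ¬ Consistent (insert ψ X)

/-- The ∀-property. -/
def AllProp {n : ℕ} {C Ap : Type} (X : Set (Form n C Ap)) : Prop :=
  ∀ (φ : Form n C Ap) (x : ℕ), Form.FV φ ⊆ {x} →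
    ∃ a : C, Form.imp (Form.subst a x φ) (.all x φ) ∈ X

/-- The canonical model. -/
def canonical (n : ℕ) (C Ap : Type) : CGS n C Ap where
  S := {X : Set (Form n C Ap) // SentenceSet X ∧ MCS X ∧ AllProp X}
  R := fun X d Y => ∀ φ, φ ∈ Y.1 → Form.box (fun i => Tm.const (d i)) φ ∈ X.1
  V := fun p X => Form.atom p ∈ X.1

/-- Renaming of constants. -/
def Tm.mapC {C C' : Type} (f : C → C') : Tm C → Tm C'
  | .var x => .var x
  | .const c => .const (f c)

def Form.mapC {n : ℕ} {C C' Ap : Type} (f : C → C') : Form n C Ap → Form n C' Ap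
  | .atom p => .atom p
  | .neg φ => .neg (mapC f φ)
  | .and φ ψ => .and (mapC f φ) (mapC f ψ)
  | .box ts φ => .box (fun i => (ts i).mapC f) (mapC f φ)
  | .all y φ => .all y (mapC f φ)



/-! ### Auxiliary development -/

section Aux

instance {C : Type} [Countable C] : Countable (Tm C) := by
  have : Function.Injective
      (fun t : Tm C => match t with | .var x => Sum.inl x | .const c => Sum.inr c :
        Tm C → ℕ ⊕ C) := by
    rintro ⟨⟩ ⟨⟩ h <;> simp_all
  exact this.countable

noncomputable def encF {n : ℕ} {C Ap : Type} (ec : Tm C → ℕ) (ea : Ap → ℕ) : Form n C Ap → ℕ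
  | .atom p => Nat.pair 0 (ea p)
  | .neg φ => Nat.pair 1 (encF ec ea φ)
  | .and φ ψ => Nat.pair 2 (Nat.pair (encF ec ea φ) (encF ec ea ψ))
  | .box ts φ => Nat.pair 3 (Nat.pair (Encodable.encode (List.ofFn (fun i => ec (ts i)))) (encF ec ea φ))
  | .all y φ => Nat.pair 4 (Nat.pair y (encF ec ea φ))

instance {n : ℕ} {C Ap : Type} [Countable C] [Countable Ap] : Countable (Form n C Ap) := by
  obtain ⟨ec, hec⟩ := Countable.exists_injective_nat (Tm C)
  obtain ⟨ea, hea⟩ := Countable.exists_injective_nat Ap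
  have : Function.Injective (encF (n := n) ec ea) := by
    intro φ
    induction φ with
    | atom p => rintro ⟨⟩ h <;> simp [encF, Nat.pair_eq_pair] at h
                · exact congrArg _ (hea h)
    | neg φ ih => rintro ⟨⟩ h <;> simp [encF, Nat.pair_eq_pair] at h
                  · exact congrArg _ (ih h)
    | and φ ψ ih1 ih2 => rintro ⟨⟩ h <;> simp [encF, Nat.pair_eq_pair] at h
                         · exact congrArg₂ _ (ih1 h.1) (ih2 h.2)
    | box ts φ ih =>
        rintro ⟨⟩ h <;> simp [encF, Nat.pair_eq_pair] at h
        · obtain ⟨h1, h2⟩ := h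
          have hts : ts = _ := funext fun i => hec (congrFun h1 i)
          exact congrArg₂ _ hts (ih h2)
    | all y φ ih => rintro ⟨⟩ h <;> simp [encF, Nat.pair_eq_pair] at h
                    · exact congrArg₂ _ h.1 (ih h.2)
  exact this.countable

variable {n : ℕ} {C Ap : Type}

lemma evalP_imp (v : Form n C Ap → Prop) (a b : Form n C Ap) :
    evalP v (Form.imp a b) ↔ (evalP v a → evalP v b) := by
  simp [Form.imp, evalP]

lemma evalP_foldr (v : Form n C Ap → Prop) (L : List (Form n C Ap)) (φ : Form n C Ap) :
    evalP v (L.foldr Form.imp φ) ↔ ((∀ ψ ∈ L, evalP v ψ) → evalP v φ) := by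
  induction L with
  | nil => simp
  | cons a L ih => simp [evalP_imp, ih]

lemma derivFrom_of_deriv {X : Set (Form n C Ap)} {φ : Form n C Ap} (h : Deriv φ) :
    DerivFrom X φ := ⟨[], by simp, h⟩

lemma DerivFrom.mono {X Y : Set (Form n C Ap)} {φ : Form n C Ap} (hXY : X ⊆ Y) :
    DerivFrom X φ → DerivFrom Y φ := fun ⟨L, h1, h2⟩ => ⟨L, fun ψ hψ => hXY (h1 ψ hψ), h2⟩

lemma DerivFrom.mp {X : Set (Form n C Ap)} {φ ψ : Form n C Ap}
    (h1 : DerivFrom X (Form.imp φ ψ)) (h2 : DerivFrom X φ) : DerivFrom X ψ := by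
  obtain ⟨L1, hL1, hd1⟩ := h1; obtain ⟨L2, hL2, hd2⟩ := h2
  refine ⟨L1 ++ L2, ?_, ?_⟩
  · intro x hx; rcases List.mem_append.1 hx with h | h
    exacts [hL1 _ h, hL2 _ h]
  · have t : Taut (Form.imp (L1.foldr Form.imp (Form.imp φ ψ))
        (Form.imp (L2.foldr Form.imp φ) ((L1 ++ L2).foldr Form.imp ψ))) := by
      intro v; simp only [evalP_imp, evalP_foldr, List.mem_append]
      intro a b c; exact (a (fun χ h => c χ (Or.inl h))) (b (fun χ h => c χ (Or.inr h)))
    exact ((Deriv.PC t).MP hd1).MP hd2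

open Classical in
lemma deduction {X : Set (Form n C Ap)} {θ φ : Form n C Ap}
    (h : DerivFrom (insert θ X) φ) : DerivFrom X (Form.imp θ φ) := by
  classical
  obtain ⟨L, hL, hd⟩ := h
  refine ⟨L.filter (fun ψ => ψ ≠ θ), ?_, ?_⟩
  · intro ψ hψ
    rw [List.mem_filter] at hψ
    have h1 := hL ψ hψ.1
    have h2 : ψ ≠ θ := by simpa using hψ.2
    rcases h1 with h | h
    · exact absurd h h2
    · exact h
  · have t : Taut (Form.imp (L.foldr Form.imp φ)
        ((L.filter (fun ψ => ψ ≠ θ)).foldr Form.imp (Form.imp θ φ))) := by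
      intro v
      simp only [evalP_imp, evalP_foldr, List.mem_filter, decide_eq_true_eq]
      intro h1 h2 h3
      apply h1
      intro ψ hψ
      by_cases hψθ : ψ = θ
      · subst hψθ; exact h3
      · exact h2 ψ ⟨hψ, hψθ⟩
    exact (Deriv.PC t).MP hd

lemma derivFrom_neg_of_not_consistent_insert {X : Set (Form n C Ap)} {θ : Form n C Ap}
    (h : ¬ Consistent (insert θ X)) : DerivFrom X (Form.neg θ) := by
  rw [Consistent, not_not] at h
  obtain ⟨φ, h1, h2⟩ := h
  have d1 := deduction h1
  have d2 := deduction h2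
  have t : Taut (Form.imp (Form.imp θ φ)
      (Form.imp (Form.imp θ (Form.neg φ)) (Form.neg θ))) := by
    intro v; simp only [evalP_imp, evalP]; tauto
  exact ((derivFrom_of_deriv (Deriv.PC t)).mp d1).mp d2

lemma consistent_insert_of_deriv {X : Set (Form n C Ap)} {θ : Form n C Ap}
    (hX : Consistent X) (h : DerivFrom X θ) : Consistent (insert θ X) := by
  by_contra hc
  exact hX ⟨θ, h, derivFrom_neg_of_not_consistent_insert hc⟩

/-- Conjunction of a list, with a tautological base. -/
def conjL (p0 : Ap) (L : List (Form n C Ap)) : Form n C Ap :=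
  L.foldr Form.and (Form.imp (.atom p0) (.atom p0))

lemma evalP_conjL (v : Form n C Ap → Prop) (p0 : Ap) (L : List (Form n C Ap)) :
    evalP v (conjL p0 L) ↔ ∀ ψ ∈ L, evalP v ψ := by
  induction L with
  | nil => simp [conjL, evalP_imp]
  | cons a L ih => simp [conjL, evalP] at ih ⊢; tauto

lemma not_occursT_conjL {t : Tm C} {p0 : Ap} {L : List (Form n C Ap)}
    (h : ∀ ψ ∈ L, ¬ Form.occursT t ψ) : ¬ Form.occursT t (conjL p0 L) := by
  induction L with
  | nil => simp [conjL, Form.imp, Form.occursT]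
  | cons a L ih =>
      simp only [conjL, List.foldr_cons, Form.occursT]
      push_neg
      exact ⟨h a List.mem_cons_self, ih (fun ψ hψ => h ψ (List.mem_cons_of_mem a hψ))⟩

lemma derivFrom_all {Z : Set (Form n C Ap)} {φ : Form n C Ap} {x : ℕ} {a : C} (p0 : Ap)
    (hfresh : ∀ ψ ∈ Z, ¬ Form.occursT (Tm.const a) ψ)
    (h : DerivFrom Z (Form.substT (Tm.const a) x φ)) : DerivFrom Z (.all x φ) := by
  obtain ⟨L, hL, hd⟩ := h
  have t1 : Taut (Form.imp (L.foldr Form.imp (Form.substT (Tm.const a) x φ))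
      (Form.imp (conjL p0 L) (Form.substT (Tm.const a) x φ))) := by
    intro v; simp only [evalP_imp, evalP_foldr, evalP_conjL]; tauto
  have hd2 : Deriv (Form.imp (conjL p0 L) (Form.substT (Tm.const a) x φ)) :=
    (Deriv.PC t1).MP hd
  have hocc : ¬ Form.occursT (Tm.const a) (conjL p0 L) :=
    not_occursT_conjL (fun ψ hψ => hfresh ψ (hL ψ hψ))
  have hd3 : Deriv (Form.imp (conjL p0 L) (.all x φ)) := Deriv.Gen (Tm.const a) x hd2 hocc
  have t2 : Taut (Form.imp (Form.imp (conjL p0 L) (.all x φ))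
      (L.foldr Form.imp (.all x φ))) := by
    intro v; simp only [evalP_imp, evalP_foldr, evalP_conjL]; tauto
  exact ⟨L, hL, (Deriv.PC t2).MP hd3⟩

lemma consistent_insert_witness {Z : Set (Form n C Ap)} (p0 : Ap) {φ : Form n C Ap}
    {x : ℕ} {a : C} (hZ : Consistent Z)
    (hfresh : ∀ ψ ∈ Z, ¬ Form.occursT (Tm.const a) ψ) :
    Consistent (insert (Form.imp (Form.subst a x φ) (.all x φ)) Z) := by
  by_contra hc
  have hneg := derivFrom_neg_of_not_consistent_insert hc
  have t1 : Taut (Form.imp (Form.neg (Form.imp (Form.subst a x φ) (.all x φ)))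
      (Form.subst a x φ)) := by
    intro v; simp only [evalP_imp, Form.imp, evalP]; tauto
  have t2 : Taut (Form.imp (Form.neg (Form.imp (Form.subst a x φ) (.all x φ)))
      (Form.neg (.all x φ))) := by
    intro v; simp only [evalP_imp, Form.imp, evalP]; tauto
  have h1 : DerivFrom Z (Form.subst a x φ) := (derivFrom_of_deriv (Deriv.PC t1)).mp hneg
  have h2 : DerivFrom Z (Form.neg (.all x φ)) := (derivFrom_of_deriv (Deriv.PC t2)).mp hneg
  have h3 : DerivFrom Z (.all x φ) := derivFrom_all p0 hfresh h1
  exact hZ ⟨_, h3, h2⟩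

end Aux


section Rename

variable {n : ℕ} {C Ap : Type}

/-- Replace new constants by variables. -/
def rT (g : ℕ → ℕ) : Tm (C ⊕ ℕ) → Tm C
  | .var x => .var x
  | .const (.inl c) => .const c
  | .const (.inr m) => .var (g m)

def rF (g : ℕ → ℕ) : Form n (C ⊕ ℕ) Ap → Form n C Ap
  | .atom p => .atom p
  | .neg φ => .neg (rF g φ)
  | .and φ ψ => .and (rF g φ) (rF g ψ)
  | .box ts φ => .box (fun i => rT g (ts i)) (rF g φ)
  | .all y φ => .all y (rF g φ)

lemma rF_imp (g : ℕ → ℕ) (a b : Form n (C ⊕ ℕ) Ap) :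
    rF g (Form.imp a b) = Form.imp (rF g a) (rF g b) := rfl

lemma rF_iff (g : ℕ → ℕ) (a b : Form n (C ⊕ ℕ) Ap) :
    rF g (Form.iff a b) = Form.iff (rF g a) (rF g b) := rfl

lemma evalP_rF (g : ℕ → ℕ) (v : Form n C Ap → Prop) (φ : Form n (C ⊕ ℕ) Ap) :
    evalP v (rF g φ) ↔ evalP (fun ψ => v (rF g ψ)) φ := by
  induction φ with
  | atom p => rfl
  | neg φ ih => simp [rF, evalP, ih]
  | and φ ψ ih1 ih2 => simp [rF, evalP, ih1, ih2]
  | box ts φ ih => rfl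
  | all y φ ih => rfl

lemma taut_rF (g : ℕ → ℕ) {φ : Form n (C ⊕ ℕ) Ap} (h : Taut φ) : Taut (rF g φ) := by
  intro v
  rw [evalP_rF]
  exact h _

/-- Strict bound on the variable of a term. -/
def vT : Tm (C ⊕ ℕ) → ℕ
  | .var x => x + 1
  | .const _ => 0

/-- Strict bound on all variables appearing in a formula. -/
def vF : Form n (C ⊕ ℕ) Ap → ℕ
  | .atom _ => 0
  | .neg φ => vF φ
  | .and φ ψ => max (vF φ) (vF ψ)
  | .box ts φ => max (vF φ) (Finset.univ.sup (fun i => vT (ts i)))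
  | .all y φ => max (y + 1) (vF φ)

lemma rT_eq_var_iff {g : ℕ → ℕ} {x : ℕ} (hg : ∀ m, g m ≠ x) (s : Tm (C ⊕ ℕ)) :
    rT g s = Tm.var x ↔ s = Tm.var x := by
  rcases s with y | (c | m) <;> simp [rT]
  exact hg m

lemma rF_substT {g : ℕ → ℕ} {x : ℕ} (hg : ∀ m, g m ≠ x) (t : Tm (C ⊕ ℕ))
    (φ : Form n (C ⊕ ℕ) Ap) :
    rF g (Form.substT t x φ) = Form.substT (rT g t) x (rF g φ) := by
  induction φ with
  | atom p => rfl
  | neg φ ih => simp [Form.substT, rF, ih]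
  | and φ ψ ih1 ih2 => simp [Form.substT, rF, ih1, ih2]
  | box ts φ ih =>
      simp only [Form.substT, rF, ih]
      congr 1
      funext i
      by_cases h : ts i = Tm.var x
      · rw [if_pos h, if_pos ((rT_eq_var_iff hg (ts i)).2 h)]
      · rw [if_neg h, if_neg (fun hc => h ((rT_eq_var_iff hg (ts i)).1 hc))]
  | all y φ ih =>
      by_cases h : y = x <;> simp [Form.substT, rF, h, ih]

lemma occursT_rF {g : ℕ → ℕ} {t : Tm (C ⊕ ℕ)} {φ : Form n (C ⊕ ℕ) Ap}
    (hinj : Function.Injective g)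
    (hgt : ∀ y, t = Tm.var y → ∀ m, g m ≠ y)
    (hgφ : ∀ m, vF φ ≤ g m)
    (h : Form.occursT (rT g t) (rF g φ)) : Form.occursT t φ := by
  induction φ with
  | atom p => exact h
  | neg φ ih => exact ih (fun m => hgφ m) h
  | and φ ψ ih1 ih2 =>
      rcases h with h | h
      · exact Or.inl (ih1 (fun m => le_trans (le_max_left _ _) (hgφ m)) h)
      · exact Or.inr (ih2 (fun m => le_trans (le_max_right _ _) (hgφ m)) h)
  | box ts φ ih =>
      rcases h with ⟨i, hi⟩ | h
      · left
        refine ⟨i, ?_⟩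
        simp only at hi
        have hvti : vT (ts i) ≤ vF (Form.box ts φ) := by
          simp only [vF]
          exact le_trans (Finset.le_sup (f := fun i => vT (ts i)) (Finset.mem_univ i))
            (le_max_right _ _)
        rcases t with z | (c' | m') <;> rcases hts : ts i with y | (c | m) <;>
          rw [hts] at hi <;> simp [rT] at hi
        · simp [hi]
        · exact absurd hi (hgt z rfl m)
        · simp [hi]
        · exfalso
          rw [hts] at hvti
          simp [vT] at hvti
          have := hgφ m'
          omega
        · simp [hinj hi]
      · exact Or.inr (ih (fun m => le_trans (le_max_left _ _) (hgφ m)) h)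
  | all y φ ih =>
      rcases h with h | h
      · rcases t with z | (c | m) <;> simp [rT] at h
        · exact Or.inl (by rw [h])
        · exfalso
          have h1 : y + 1 ≤ g m := le_trans (le_max_left _ _) (hgφ m)
          omega
      · exact Or.inr (ih (fun m => le_trans (le_max_right _ _) (hgφ m)) h)

theorem deriv_rename {φ : Form n (C ⊕ ℕ) Ap} (h : Deriv φ) :
    ∃ B : ℕ, ∀ g : ℕ → ℕ, Function.Injective g → (∀ m, B ≤ g m) → Deriv (rF g φ) := by
  induction h with
  | PC h => exact ⟨0, fun g _ _ => Deriv.PC (taut_rF g h)⟩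
  | K ts φ ψ => exact ⟨0, fun g _ _ => by
      rw [rF_iff]; exact Deriv.K (fun i => rT g (ts i)) (rF g φ) (rF g ψ)⟩
  | N ts φ => exact ⟨0, fun g _ _ => by
      rw [rF_iff]; exact Deriv.N (fun i => rT g (ts i)) (rF g φ)⟩
  | E x t φ =>
      refine ⟨x + 1, fun g hginj hgB => ?_⟩
      have hg : ∀ m, g m ≠ x := fun m => by have := hgB m; omega
      rw [rF_imp, rF_substT hg]
      exact Deriv.E x (rT g t) (rF g φ)
  | B ts x φ hts =>
      refine ⟨x + 1, fun g hginj hgB => ?_⟩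
      rw [rF_imp]
      refine Deriv.B (fun i => rT g (ts i)) x (rF g φ) ?_
      intro i hc
      rcases h : ts i with y | (c | m) <;> rw [h] at hc <;> simp [rT] at hc
      · exact hts i (by rw [h, hc])
      · have := hgB m; omega
  | MP h1 h2 ih1 ih2 =>
      obtain ⟨B1, H1⟩ := ih1
      obtain ⟨B2, H2⟩ := ih2
      refine ⟨max B1 B2, fun g hginj hgB => ?_⟩
      have d1 := H1 g hginj (fun m => le_trans (le_max_left _ _) (hgB m))
      have d2 := H2 g hginj (fun m => le_trans (le_max_right _ _) (hgB m))
      rw [rF_imp] at d1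
      exact d1.MP d2
  | Nec ts h ih =>
      obtain ⟨B, H⟩ := ih
      exact ⟨B, fun g hginj hgB => Deriv.Nec _ (H g hginj hgB)⟩
  | @Gen φ ψ t x h hocc ih =>
      obtain ⟨B1, H1⟩ := ih
      refine ⟨max B1 (max (x + 1) (max (vF φ) (vT t))), fun g hginj hgB => ?_⟩
      have hB1 : ∀ m, B1 ≤ g m := fun m => le_trans (le_max_left _ _) (hgB m)
      have hgx : ∀ m, g m ≠ x := fun m => by
        have := le_trans (le_trans (le_max_left _ _) (le_max_right B1 _)) (hgB m); omega
      have hgφ : ∀ m, vF φ ≤ g m := fun m =>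
        le_trans (le_trans (le_max_left _ _) (le_trans (le_max_right _ _) (le_max_right B1 _))) (hgB m)
      have hgt : ∀ y, t = Tm.var y → ∀ m, g m ≠ y := by
        intro y hy m hc
        have : vT t ≤ g m :=
          le_trans (le_trans (le_max_right _ _) (le_trans (le_max_right _ _) (le_max_right B1 _))) (hgB m)
        rw [hy] at this; simp [vT] at this; omega
      have d1 := H1 g hginj hB1
      rw [rF_imp, rF_substT hgx] at d1
      have hocc' : ¬ Form.occursT (rT g t) (rF g φ) :=
        fun hc => hocc (occursT_rF hginj hgt hgφ hc)
      rw [rF_imp]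
      exact Deriv.Gen (rT g t) x d1 hocc'

lemma rF_foldr (g : ℕ → ℕ) (L : List (Form n (C ⊕ ℕ) Ap)) (φ : Form n (C ⊕ ℕ) Ap) :
    rF g (L.foldr Form.imp φ) = (L.map (rF g)).foldr Form.imp (rF g φ) := by
  induction L with
  | nil => rfl
  | cons a L ih => simp [rF_imp, ih]

lemma rF_mapC (g : ℕ → ℕ) (φ : Form n C Ap) : rF g (Form.mapC Sum.inl φ) = φ := by
  induction φ with
  | atom p => rfl
  | neg φ ih => simp [Form.mapC, rF, ih]
  | and φ ψ ih1 ih2 => simp [Form.mapC, rF, ih1, ih2]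
  | box ts φ ih =>
      simp [Form.mapC, rF, ih]
      funext i
      rcases ts i with y | c <;> rfl
  | all y φ ih => simp [Form.mapC, rF, ih]

lemma consistent_image {X : Set (Form n C Ap)} (hc : Consistent X) :
    Consistent (Form.mapC Sum.inl '' X : Set (Form n (C ⊕ ℕ) Ap)) := by
  rintro ⟨φ, ⟨L1, h1, d1⟩, ⟨L2, h2, d2⟩⟩
  obtain ⟨B1, H1⟩ := deriv_rename d1
  obtain ⟨B2, H2⟩ := deriv_rename d2
  set g : ℕ → ℕ := fun m => max B1 B2 + m with hgdef
  have hginj : Function.Injective g := fun a b hab => by simp [hgdef] at hab; omega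
  have hg1 : ∀ m, B1 ≤ g m := fun m => by simp [hgdef]; omega
  have hg2 : ∀ m, B2 ≤ g m := fun m => by simp [hgdef]; omega
  have D1 := H1 g hginj hg1
  have D2 := H2 g hginj hg2
  rw [rF_foldr] at D1 D2
  have hmem : ∀ (L : List (Form n (C ⊕ ℕ) Ap)),
      (∀ ψ ∈ L, ψ ∈ Form.mapC Sum.inl '' X) → ∀ ψ ∈ L.map (rF g), ψ ∈ X := by
    intro L hL ψ hψ
    rw [List.mem_map] at hψ
    obtain ⟨χ, hχ, rfl⟩ := hψ
    obtain ⟨χ0, hχ0, rfl⟩ := hL χ hχ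
    rw [rF_mapC]
    exact hχ0
  refine hc ⟨rF g φ, ⟨L1.map (rF g), hmem L1 h1, D1⟩, ⟨L2.map (rF g), hmem L2 h2, ?_⟩⟩
  exact D2

end Rename


section Construction

variable {n : ℕ} {C Ap : Type}

lemma FV_substT_const (a : C) (x : ℕ) (φ : Form n C Ap) :
    Form.FV (Form.substT (Tm.const a) x φ) = Form.FV φ \ {x} := by
  induction φ with
  | atom p => simp [Form.substT, Form.FV]
  | neg φ ih => simp [Form.substT, Form.FV, ih]
  | and φ ψ ih1 ih2 => simp [Form.substT, Form.FV, ih1, ih2, Finset.union_sdiff_distrib]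
  | box ts φ ih =>
      simp only [Form.substT, Form.FV, ih]
      rw [Finset.union_sdiff_distrib]
      congr 1
      ext y
      simp only [Finset.mem_biUnion, Finset.mem_univ, true_and, Finset.mem_sdiff,
        Finset.mem_singleton]
      constructor
      · rintro ⟨i, hi⟩
        by_cases h : ts i = Tm.var x
        · rw [if_pos h] at hi; simp at hi
        · rw [if_neg h] at hi
          refine ⟨⟨i, hi⟩, ?_⟩
          rintro rfl
          rcases hts : ts i with z | c <;> rw [hts] at hi <;> simp at hi
          exact h (by rw [hts, hi])
      · rintro ⟨⟨i, hi⟩, h2⟩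
        refine ⟨i, ?_⟩
        have h : ts i ≠ Tm.var x := by
          intro hc
          rw [hc] at hi
          simp at hi
          exact h2 hi
        rw [if_neg h]
        exact hi
  | all y φ ih =>
      by_cases h : y = x
      · subst h
        simp [Form.substT, Form.FV, Finset.sdiff_idem]
      · simp only [Form.substT, if_neg h, Form.FV, ih]
        ext z
        simp only [Finset.mem_sdiff, Finset.mem_singleton]
        tauto

lemma FV_imp (a b : Form n C Ap) : Form.FV (Form.imp a b) = Form.FV a ∪ Form.FV b := rfl

lemma closed_witness {φ : Form n C Ap} {x : ℕ} (h : Form.FV φ ⊆ {x}) (a : C) :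
    Form.closed (Form.imp (Form.subst a x φ) (.all x φ)) := by
  have h1 : Form.FV φ \ {x} = ∅ := Finset.sdiff_eq_empty_iff_subset.2 h
  simp only [Form.closed, FV_imp, Form.subst, FV_substT_const, Form.FV, h1]
  simp

lemma FV_mapC {C' : Type} (f : C → C') (φ : Form n C Ap) :
    Form.FV (Form.mapC f φ) = Form.FV φ := by
  induction φ with
  | atom p => rfl
  | neg φ ih => simp [Form.mapC, Form.FV, ih]
  | and φ ψ ih1 ih2 => simp [Form.mapC, Form.FV, ih1, ih2]
  | box ts φ ih =>
      simp only [Form.mapC, Form.FV, ih]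
      congr 1
      apply Finset.biUnion_congr rfl
      intro i _
      rcases ts i with y | c <;> rfl
  | all y φ ih => simp [Form.mapC, Form.FV, ih]

/-- The fresh constants occurring in a formula. -/
def frC : Form n (C ⊕ ℕ) Ap → Finset ℕ
  | .atom _ => ∅
  | .neg φ => frC φ
  | .and φ ψ => frC φ ∪ frC ψ
  | .box ts φ => frC φ ∪ Finset.univ.biUnion
      (fun i => match ts i with | .const (.inr m) => {m} | _ => ∅)
  | .all _ φ => frC φ

lemma mem_frC_of_occurs {m : ℕ} {φ : Form n (C ⊕ ℕ) Ap}
    (h : Form.occursT (Tm.const (Sum.inr m)) φ) : m ∈ frC φ := by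
  induction φ with
  | atom p => exact absurd h id
  | neg φ ih => exact ih h
  | and φ ψ ih1 ih2 =>
      rcases h with h | h
      · exact Finset.mem_union_left _ (ih1 h)
      · exact Finset.mem_union_right _ (ih2 h)
  | box ts φ ih =>
      rcases h with ⟨i, hi⟩ | h
      · refine Finset.mem_union_right _ (Finset.mem_biUnion.2 ⟨i, Finset.mem_univ i, ?_⟩)
        rw [hi]
        simp
      · exact Finset.mem_union_left _ (ih h)
  | all y φ ih =>
      rcases h with h | h
      · exact absurd h (by simp)
      · exact ih h

lemma not_occurs_mapC (m : ℕ) (φ : Form n C Ap) :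
    ¬ Form.occursT (Tm.const (Sum.inr m)) (Form.mapC Sum.inl φ : Form n (C ⊕ ℕ) Ap) := by
  induction φ with
  | atom p => exact id
  | neg φ ih => exact ih
  | and φ ψ ih1 ih2 => rintro (h | h); exacts [ih1 h, ih2 h]
  | box ts φ ih =>
      rintro (⟨i, hi⟩ | h)
      · simp only at hi
        rcases hts : ts i with y | c <;> rw [hts] at hi <;> simp [Tm.mapC] at hi
      · exact ih h
  | all y φ ih =>
      rintro (h | h)
      · simp at h
      · exact ih h

/-- A witness formula for a pair, or a trivial tautology. -/
noncomputable def wit (p0 : Ap) (pr : Form n (C ⊕ ℕ) Ap × ℕ) (m : ℕ) : Form n (C ⊕ ℕ) Ap :=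
  if Form.FV pr.1 ⊆ {pr.2} then
    Form.imp (Form.subst (Sum.inr m) pr.2 pr.1) (.all pr.2 pr.1)
  else Form.imp (.atom p0) (.atom p0)

noncomputable def freshN (l : List (Form n (C ⊕ ℕ) Ap)) : ℕ :=
  (l.foldr (fun ψ s => frC ψ ∪ s) ∅).sup id + 1

lemma freshN_not_mem {l : List (Form n (C ⊕ ℕ) Ap)} {ψ : Form n (C ⊕ ℕ) Ap}
    (h : ψ ∈ l) : freshN l ∉ frC ψ := by
  intro hc
  have hsub : frC ψ ⊆ l.foldr (fun ψ s => frC ψ ∪ s) ∅ := by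
    clear hc
    induction l with
    | nil => simp at h
    | cons a l ih =>
        rcases List.mem_cons.1 h with rfl | h
        · exact Finset.subset_union_left
        · exact subset_trans (ih h) Finset.subset_union_right
  have := Finset.le_sup (f := id) (hsub hc)
  simp only [id] at this
  simp only [freshN] at this
  omega

noncomputable def chain (p0 : Ap) (e : ℕ → Form n (C ⊕ ℕ) Ap × ℕ) :
    ℕ → List (Form n (C ⊕ ℕ) Ap)
  | 0 => []
  | k + 1 => wit p0 (e k) (freshN (chain p0 e k)) :: chain p0 e k

lemma chain_mono {p0 : Ap} {e : ℕ → Form n (C ⊕ ℕ) Ap × ℕ} {k k' : ℕ} (h : k ≤ k')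
    {ψ : Form n (C ⊕ ℕ) Ap} (hm : ψ ∈ chain p0 e k) : ψ ∈ chain p0 e k' := by
  induction h with
  | refl => exact hm
  | step h ih => exact List.mem_cons_of_mem _ ih

lemma taut_t0 (p0 : Ap) : Taut (Form.imp (.atom p0) (.atom p0) : Form n C Ap) := by
  intro v; simp [evalP_imp]

lemma chain_closed {p0 : Ap} {e : ℕ → Form n (C ⊕ ℕ) Ap × ℕ} {k : ℕ}
    {ψ : Form n (C ⊕ ℕ) Ap} (hm : ψ ∈ chain p0 e k) : Form.closed ψ := by
  induction k with
  | zero => simp [chain] at hm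
  | succ k ih =>
      rcases List.mem_cons.1 hm with rfl | hm
      · unfold wit
        split
        · exact closed_witness (by assumption) _
        · simp [Form.closed, FV_imp, Form.FV]
      · exact ih hm

lemma chain_consistent {X : Set (Form n C Ap)} (hcons : Consistent X)
    (p0 : Ap) (e : ℕ → Form n (C ⊕ ℕ) Ap × ℕ) (k : ℕ) :
    Consistent ((Form.mapC Sum.inl '' X : Set (Form n (C ⊕ ℕ) Ap)) ∪
      {ψ | ψ ∈ chain p0 e k}) := by
  induction k with
  | zero =>
      have : (Form.mapC Sum.inl '' X : Set (Form n (C ⊕ ℕ) Ap)) ∪ {ψ | ψ ∈ chain p0 e 0}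
          = Form.mapC Sum.inl '' X := by
        simp [chain]
      rw [this]
      exact consistent_image hcons
  | succ k ih =>
      have hset : (Form.mapC Sum.inl '' X : Set (Form n (C ⊕ ℕ) Ap)) ∪
          {ψ | ψ ∈ chain p0 e (k + 1)} =
          insert (wit p0 (e k) (freshN (chain p0 e k)))
            ((Form.mapC Sum.inl '' X) ∪ {ψ | ψ ∈ chain p0 e k}) := by
        ext ψ
        simp only [Set.mem_union, Set.mem_insert_iff, Set.mem_setOf_eq, chain, List.mem_cons]
        tauto
      rw [hset]
      set m := freshN (chain p0 e k) with hm
      have hfresh : ∀ ψ ∈ (Form.mapC Sum.inl '' X : Set (Form n (C ⊕ ℕ) Ap)) ∪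
          {ψ | ψ ∈ chain p0 e k}, ¬ Form.occursT (Tm.const (Sum.inr m)) ψ := by
        rintro ψ (⟨χ, _, rfl⟩ | hψ)
        · exact not_occurs_mapC m χ
        · intro hc
          exact freshN_not_mem hψ (mem_frC_of_occurs hc)
      unfold wit
      split
      · exact consistent_insert_witness p0 ih hfresh
      · exact consistent_insert_of_deriv ih (derivFrom_of_deriv (Deriv.PC (taut_t0 p0)))

end Construction

/-- every consistent set of sentences over α extends to a consistent set
over α* (with countably many fresh constants) having the ∀-property. -/
theorem extend_forall_property {n : ℕ} {C Ap : Type}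
    [Countable C] [Nonempty C] [Countable Ap] [Nonempty Ap]
    (X : Set (Form n C Ap)) (hX : SentenceSet X) (hcons : Consistent X) :
    ∃ Y : Set (Form n (C ⊕ ℕ) Ap), SentenceSet Y ∧ Consistent Y ∧
      Form.mapC Sum.inl '' X ⊆ Y ∧ AllProp Y := by
  classical
  have p0 : Ap := Classical.arbitrary Ap
  have hne : Nonempty (Form n (C ⊕ ℕ) Ap × ℕ) := ⟨(.atom p0, 0)⟩
  obtain ⟨e, he⟩ := exists_surjective_nat (Form n (C ⊕ ℕ) Ap × ℕ)
  refine ⟨(Form.mapC Sum.inl '' X) ∪ {ψ | ∃ k, ψ ∈ chain p0 e k}, ?_, ?_, ?_, ?_⟩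
  · rintro ψ (⟨χ, hχ, rfl⟩ | ⟨k, hk⟩)
    · simp only [Form.closed, FV_mapC]
      exact hX χ hχ
    · exact chain_closed hk
  · rintro ⟨φ, ⟨L1, h1, d1⟩, ⟨L2, h2, d2⟩⟩
    have key : ∀ L : List (Form n (C ⊕ ℕ) Ap),
        (∀ ψ ∈ L, ψ ∈ (Form.mapC Sum.inl '' X) ∪ {ψ | ∃ k, ψ ∈ chain p0 e k}) →
        ∃ k, ∀ ψ ∈ L, ψ ∈ (Form.mapC Sum.inl '' X) ∪ {ψ | ψ ∈ chain p0 e k} := by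
      intro L hL
      induction L with
      | nil => exact ⟨0, by simp⟩
      | cons a L ih =>
          obtain ⟨k1, hk1⟩ := ih (fun ψ hψ => hL ψ (List.mem_cons_of_mem a hψ))
          rcases hL a List.mem_cons_self with ha | ⟨k2, hk2⟩
          · refine ⟨k1, fun ψ hψ => ?_⟩
            rcases List.mem_cons.1 hψ with rfl | hψ
            · exact Or.inl ha
            · exact hk1 ψ hψ
          · refine ⟨max k1 k2, fun ψ hψ => ?_⟩
            rcases List.mem_cons.1 hψ with rfl | hψ
            · exact Or.inr (chain_mono (le_max_right k1 k2) hk2)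
            · rcases hk1 ψ hψ with h | h
              · exact Or.inl h
              · exact Or.inr (chain_mono (le_max_left k1 k2) h)
    obtain ⟨k, hk⟩ := key (L1 ++ L2) (by
      intro ψ hψ
      rcases List.mem_append.1 hψ with h | h
      exacts [h1 ψ h, h2 ψ h])
    exact chain_consistent hcons p0 e k
      ⟨φ, ⟨L1, fun ψ h => hk ψ (List.mem_append_left _ h), d1⟩,
          ⟨L2, fun ψ h => hk ψ (List.mem_append_right _ h), d2⟩⟩
  · exact fun ψ hψ => Or.inl hψ
  · intro φ x hFV
    obtain ⟨k, hk⟩ := he (φ, x)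
    refine ⟨Sum.inr (freshN (chain p0 e k)), Or.inr ⟨k + 1, ?_⟩⟩
    have hwit : wit p0 (e k) (freshN (chain p0 e k)) =
        Form.imp (Form.subst (Sum.inr (freshN (chain p0 e k))) x φ) (.all x φ) := by
      rw [hk]
      unfold wit
      simp only
      rw [if_pos hFV]
    show _ ∈ wit p0 (e k) (freshN (chain p0 e k)) :: chain p0 e k
    rw [hwit]
    exact List.mem_cons_self
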